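/- Let Ω ⊆ ℝ^d be open and bounded, p ∈ (1,∞), μ ∈ P_p(Ω), and f_n, f ∈ L^p(μ; ℝ^m). Then f_n → f in L^p(μ) (i.e., ∫ |f_n − f|_p^p dμ → 0) if and only if d_TLp((μ, f_n), (μ, f)) → 0. -/

import Mathlib

open MeasureTheory Filter Topology

/-- `∑ i, |v i|^p`, the p-th power of the ℓ^p norm on ℝ^k. -/
noncomputable def lpPow (p : ℝ) {k : ℕ} (v : Fin k → ℝ) : ℝ := ∑ i, |v i| ^ p

/-- `π` is a coupling (transport plan) between `μ` and `ν`. -/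
def IsCoupling {α β : Type*} [MeasurableSpace α] [MeasurableSpace β]
    (π : Measure (α × β)) (μ : Measure α) (ν : Measure β) : Prop :=
  π.map Prod.fst = μ ∧ π.map Prod.snd = ν

/-- The Kantorovich optimal transport cost for a cost function `c`. -/
noncomputable def OTCost {α β : Type*} [MeasurableSpace α] [MeasurableSpace β]
    (c : α → β → ℝ) (μ : Measure α) (ν : Measure β) : ℝ :=
  ⨅ π : {π : Measure (α × β) // IsCoupling π μ ν},
    ∫ z, c z.1 z.2 ∂(π : Measure (α × β))

/-- The TL^p distance between `(μ, f)` and `(ν, g)`. -/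
noncomputable def dTLp (p : ℝ) {d m : ℕ} (μ ν : Measure (Fin d → ℝ))
    (f g : (Fin d → ℝ) → Fin m → ℝ) : ℝ :=
  (OTCost (fun x y => lpPow p (x - y) + lpPow p (f x - g y)) μ ν) ^ (1 / p)


lemma lpPow_nonneg {p : ℝ} {k : ℕ} (v : Fin k → ℝ) : 0 ≤ lpPow p v :=
  Finset.sum_nonneg fun i _ => Real.rpow_nonneg (abs_nonneg _) _

lemma lpPow_continuous {p : ℝ} (hp : 0 ≤ p) (k : ℕ) : Continuous (lpPow p (k := k)) := by
  refine continuous_finset_sum _ fun i _ => ?_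
  exact ((continuous_apply i).abs).rpow_const fun x => Or.inr hp

lemma lpPow_le_card_mul {p : ℝ} (hp : 0 ≤ p) {k : ℕ} (v : Fin k → ℝ) :
    lpPow p v ≤ k * ‖v‖ ^ p := by
  have h : ∀ i, |v i| ^ p ≤ ‖v‖ ^ p := fun i =>
    Real.rpow_le_rpow (abs_nonneg _) (by simpa using norm_le_pi_norm v i) hp
  calc lpPow p v ≤ ∑ _i : Fin k, ‖v‖ ^ p := Finset.sum_le_sum fun i _ => h i
  _ = k * ‖v‖ ^ p := by simp [Finset.sum_const, nsmul_eq_mul]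

lemma norm_rpow_le_lpPow {p : ℝ} (hp : 0 < p) {k : ℕ} (v : Fin k → ℝ) :
    ‖v‖ ^ p ≤ lpPow p v := by
  rcases Nat.eq_zero_or_pos k with hk | hk
  · subst hk
    have hv : ‖v‖ = 0 := by simp [norm_le_zero_iff.1 (le_of_eq (Subsingleton.elim v 0 ▸ norm_zero))]
    simp [lpPow, hv, Real.zero_rpow hp.ne']
  · have : Nonempty (Fin k) := ⟨⟨0, hk⟩⟩
    obtain ⟨i, hi⟩ := Finite.exists_max fun i => |v i|
    have hnorm : ‖v‖ = |v i| := by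
      refine le_antisymm ?_ (by simpa using norm_le_pi_norm v i)
      refine (pi_norm_le_iff_of_nonneg (abs_nonneg _)).2 fun j => by simpa using hi j
    rw [hnorm]
    exact Finset.single_le_sum (fun j _ => Real.rpow_nonneg (abs_nonneg _) _) (Finset.mem_univ i)

lemma lpPow_neg {p : ℝ} {k : ℕ} (v : Fin k → ℝ) : lpPow p (-v) = lpPow p v := by
  simp [lpPow]

lemma lpPow_add_le {p : ℝ} (hp : 0 ≤ p) {k : ℕ} (a b : Fin k → ℝ) :
    lpPow p (a + b) ≤ 2 ^ p * (lpPow p a + lpPow p b) := by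
  have key : ∀ i : Fin k, |a i + b i| ^ p ≤ 2 ^ p * (|a i| ^ p + |b i| ^ p) := by
    intro i
    have h1 : |a i + b i| ≤ 2 * max |a i| |b i| := by
      calc |a i + b i| ≤ |a i| + |b i| := abs_add_le _ _
      _ ≤ 2 * max |a i| |b i| := by
          rw [two_mul]
          exact add_le_add (le_max_left _ _) (le_max_right _ _)
    calc |a i + b i| ^ p ≤ (2 * max |a i| |b i|) ^ p :=
          Real.rpow_le_rpow (abs_nonneg _) h1 hp
    _ = 2 ^ p * (max |a i| |b i|) ^ p := by
          rw [Real.mul_rpow (by norm_num) (le_max_iff.2 (Or.inl (abs_nonneg _)))]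
    _ ≤ 2 ^ p * (|a i| ^ p + |b i| ^ p) := by
          gcongr
          rcases max_cases |a i| |b i| with ⟨h, _⟩ | ⟨h, _⟩ <;> rw [h]
          · exact le_add_of_nonneg_right (Real.rpow_nonneg (abs_nonneg _) _)
          · exact le_add_of_nonneg_left (Real.rpow_nonneg (abs_nonneg _) _)
  calc lpPow p (a + b) = ∑ i, |a i + b i| ^ p := rfl
  _ ≤ ∑ i, 2 ^ p * (|a i| ^ p + |b i| ^ p) := Finset.sum_le_sum fun i _ => key i
  _ = 2 ^ p * (lpPow p a + lpPow p b) := by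
      simp [lpPow, Finset.mul_sum, Finset.sum_add_distrib, mul_add]

lemma lpPow_sub_le {p : ℝ} (hp : 0 ≤ p) {k : ℕ} (a b c : Fin k → ℝ) :
    lpPow p (a - c) ≤ 2 ^ p * (lpPow p (a - b) + lpPow p (b - c)) := by
  have : a - c = (a - b) + (b - c) := by abel
  rw [this]; exact lpPow_add_le hp _ _

lemma integrable_lpPow {p : ℝ} (hp : 0 < p) {α : Type*} [MeasurableSpace α]
    {μ : Measure α} {k : ℕ} {f : α → Fin k → ℝ}
    (hf : MemLp f (ENNReal.ofReal p) μ) :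
    Integrable (fun x => lpPow p (f x)) μ := by
  have hq0 : ENNReal.ofReal p ≠ 0 := by
    simp [ENNReal.ofReal_eq_zero, not_le, hp]
  have hint : Integrable (fun x => (k : ℝ) * ‖f x‖ ^ p) μ := by
    simpa [ENNReal.toReal_ofReal hp.le] using
      (hf.integrable_norm_rpow hq0 ENNReal.ofReal_ne_top).const_mul (k : ℝ)
  refine hint.mono' ((lpPow_continuous hp.le k).comp_aestronglyMeasurable
    hf.aestronglyMeasurable) ?_
  filter_upwards with x
  rw [Real.norm_of_nonneg (lpPow_nonneg _)]
  exact lpPow_le_card_mul hp.le _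

section coupling
variable {α : Type*} [MeasurableSpace α] {μ ν : Measure α} {π : Measure (α × α)}
variable {E : Type*} [NormedAddCommGroup E]

lemma IsCoupling.isProb (hπ : IsCoupling π μ ν) [IsProbabilityMeasure μ] :
    IsProbabilityMeasure π := by
  constructor
  have := hπ.1
  calc π Set.univ = π (Prod.fst ⁻¹' (Set.univ : Set α)) := by simp
  _ = (π.map Prod.fst) Set.univ := (Measure.map_apply measurable_fst MeasurableSet.univ).symm
  _ = 1 := by rw [this]; exact measure_univ

lemma IsCoupling.aesm_fst (hπ : IsCoupling π μ ν) {h : α → E}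
    (hh : AEStronglyMeasurable h μ) :
    AEStronglyMeasurable (fun z : α × α => h z.1) π := by
  have : AEStronglyMeasurable h (π.map Prod.fst) := hπ.1 ▸ hh
  exact this.comp_aemeasurable measurable_fst.aemeasurable

lemma IsCoupling.aesm_snd (hπ : IsCoupling π μ ν) {h : α → E}
    (hh : AEStronglyMeasurable h ν) :
    AEStronglyMeasurable (fun z : α × α => h z.2) π := by
  have : AEStronglyMeasurable h (π.map Prod.snd) := hπ.2 ▸ hh
  exact this.comp_aemeasurable measurable_snd.aemeasurable

lemma IsCoupling.integrable_fst (hπ : IsCoupling π μ ν) {h : α → E}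
    (hh : Integrable h μ) :
    Integrable (fun z : α × α => h z.1) π := by
  have : Integrable h (π.map Prod.fst) := hπ.1 ▸ hh
  exact (integrable_map_measure (hπ.1 ▸ hh.aestronglyMeasurable)
    measurable_fst.aemeasurable).1 this

lemma IsCoupling.integrable_snd (hπ : IsCoupling π μ ν) {h : α → E}
    (hh : Integrable h ν) :
    Integrable (fun z : α × α => h z.2) π := by
  have : Integrable h (π.map Prod.snd) := hπ.2 ▸ hh
  exact (integrable_map_measure (hπ.2 ▸ hh.aestronglyMeasurable)
    measurable_snd.aemeasurable).1 this

variable {F : Type*} [NormedAddCommGroup F] [NormedSpace ℝ F]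

lemma IsCoupling.integral_fst (hπ : IsCoupling π μ ν) {h : α → F}
    (hh : AEStronglyMeasurable h μ) :
    ∫ z, h z.1 ∂π = ∫ x, h x ∂μ := by
  rw [← hπ.1, integral_map measurable_fst.aemeasurable (hπ.1 ▸ hh)]

lemma IsCoupling.integral_snd (hπ : IsCoupling π μ ν) {h : α → F}
    (hh : AEStronglyMeasurable h ν) :
    ∫ z, h z.2 ∂π = ∫ x, h x ∂ν := by
  rw [← hπ.2, integral_map measurable_snd.aemeasurable (hπ.2 ▸ hh)]

end coupling

lemma isCoupling_diag {α : Type*} [MeasurableSpace α] [TopologicalSpace α]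
    [T2Space α] [BorelSpace α] (μ : Measure α) :
    IsCoupling (μ.map (fun x => (x, x))) μ μ := by
  have hme : Measurable (fun x : α => (x, x)) := measurable_id.prodMk measurable_id
  constructor
  · rw [Measure.map_map measurable_fst hme]; simp [Function.comp_def]
  · rw [Measure.map_map measurable_snd hme]; simp [Function.comp_def]

lemma measurableEmbedding_diag {α : Type*} [MeasurableSpace α] [TopologicalSpace α]
    [T2Space α] [BorelSpace α] [SecondCountableTopology α] :
    MeasurableEmbedding (fun x : α => (x, x)) := by
  refine (isEmbedding_graph continuous_id).measurableEmbedding ?_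
  have : (Set.range fun x : α => (x, id x)) = Set.diagonal α := Set.range_diag
  rw [this]
  exact isClosed_diagonal.measurableSet

section couplingae
variable {α : Type*} [MeasurableSpace α] {μ ν : Measure α} {π : Measure (α × α)}

lemma IsCoupling.ae_fst (hπ : IsCoupling π μ ν) {Q : α → Prop} (h : ∀ᵐ x ∂μ, Q x) :
    ∀ᵐ z ∂π, Q z.1 := by
  rw [ae_iff] at h
  obtain ⟨N, hsub, hNm, hN0⟩ := exists_measurable_superset_of_null h
  have hπN : π (Prod.fst ⁻¹' N) = 0 := by
    rw [← Measure.map_apply measurable_fst hNm, hπ.1]; exact hN0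
  rw [ae_iff]
  exact measure_mono_null (fun z hz => hsub hz) hπN

lemma IsCoupling.ae_snd (hπ : IsCoupling π μ ν) {Q : α → Prop} (h : ∀ᵐ x ∂ν, Q x) :
    ∀ᵐ z ∂π, Q z.2 := by
  rw [ae_iff] at h
  obtain ⟨N, hsub, hNm, hN0⟩ := exists_measurable_superset_of_null h
  have hπN : π (Prod.snd ⁻¹' N) = 0 := by
    rw [← Measure.map_apply measurable_snd hNm, hπ.2]; exact hN0
  rw [ae_iff]
  exact measure_mono_null (fun z hz => hsub hz) hπN

end couplingae

section dim
variable {d : ℕ} {μ : Measure (Fin d → ℝ)} {π : Measure ((Fin d → ℝ) × (Fin d → ℝ))}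

lemma integrable_lpPow_diag {p R : ℝ} (hp : 0 < p) (hπ : IsCoupling π μ μ)
    [IsProbabilityMeasure μ] [IsProbabilityMeasure π]
    (hR : ∀ᵐ x ∂μ, ‖x‖ ≤ R) :
    Integrable (fun z : (Fin d → ℝ) × (Fin d → ℝ) => lpPow p (z.1 - z.2)) π := by
  have haesm : AEStronglyMeasurable
      (fun z : (Fin d → ℝ) × (Fin d → ℝ) => lpPow p (z.1 - z.2)) π :=
    ((lpPow_continuous hp.le d).comp (continuous_fst.sub continuous_snd)).aestronglyMeasurable
  refine (integrable_const ((d : ℝ) * (R + R) ^ p)).mono' haesm ?_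
  filter_upwards [hπ.ae_fst hR, hπ.ae_snd hR] with z h1 h2
  rw [Real.norm_of_nonneg (lpPow_nonneg _)]
  calc lpPow p (z.1 - z.2) ≤ d * ‖z.1 - z.2‖ ^ p := lpPow_le_card_mul hp.le _
  _ ≤ d * (R + R) ^ p :=
      mul_le_mul_of_nonneg_left (Real.rpow_le_rpow (norm_nonneg _)
        ((norm_sub_le _ _).trans (add_le_add h1 h2)) hp.le) (Nat.cast_nonneg d)

lemma markov_diag {p : ℝ} (hp : 0 < p) {δ₀ : ℝ} (hδ₀ : 0 < δ₀)
    (hint : Integrable (fun z : (Fin d → ℝ) × (Fin d → ℝ) => lpPow p (z.1 - z.2)) π) :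
    δ₀ ^ p * (π {z : (Fin d → ℝ) × (Fin d → ℝ) | δ₀ ≤ dist z.1 z.2}).toReal
      ≤ ∫ z, lpPow p (z.1 - z.2) ∂π := by
  set S := {z : (Fin d → ℝ) × (Fin d → ℝ) | δ₀ ≤ dist z.1 z.2} with hS
  have hSm : MeasurableSet S := by
    have : IsClosed S := isClosed_le continuous_const (continuous_fst.dist continuous_snd)
    exact this.measurableSet
  have hle : ∀ z, S.indicator (fun _ => δ₀ ^ p) z ≤ lpPow p (z.1 - z.2) := by
    intro z
    rcases Set.indicator_eq_zero_or_self S (fun _ => δ₀ ^ p) z with h | h <;> rw [h]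
    · exact lpPow_nonneg _
    · have hz : z ∈ S := by
        by_contra hz
        rw [Set.indicator_of_notMem hz] at h
        exact (Real.rpow_pos_of_pos hδ₀ p).ne' h.symm
      calc δ₀ ^ p ≤ ‖z.1 - z.2‖ ^ p := by
            refine Real.rpow_le_rpow hδ₀.le ?_ hp.le
            rw [← dist_eq_norm]; exact hz
      _ ≤ lpPow p (z.1 - z.2) := norm_rpow_le_lpPow hp _
  calc δ₀ ^ p * (π S).toReal = ∫ z, S.indicator (fun _ => δ₀ ^ p) z ∂π := by
        rw [integral_indicator_const _ hSm]; simp [mul_comm, measureReal_def]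
  _ ≤ ∫ z, lpPow p (z.1 - z.2) ∂π :=
      integral_mono_of_nonneg (Filter.Eventually.of_forall fun z =>
        Set.indicator_nonneg (fun _ _ => Real.rpow_nonneg hδ₀.le _) z) hint
        (Filter.Eventually.of_forall hle)

end dim

lemma integral_lpPow_le_of_eLpNorm_le {p εa : ℝ} (hp : 0 < p) (hεa : 0 < εa)
    {α : Type*} [MeasurableSpace α] {μ : Measure α} {k : ℕ} {h : α → Fin k → ℝ}
    (hh : MemLp h (ENNReal.ofReal p) μ)
    (hle : eLpNorm h (ENNReal.ofReal p) μ ≤ ENNReal.ofReal εa) :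
    ∫ x, lpPow p (h x) ∂μ ≤ k * εa ^ p := by
  have hq0 : (ENNReal.ofReal p) ≠ 0 := by simp [ENNReal.ofReal_eq_zero, not_le, hp]
  have htr : (ENNReal.ofReal p).toReal = p := ENNReal.toReal_ofReal hp.le
  have hInorm : ∫ x, ‖h x‖ ^ p ∂μ ≤ εa ^ p := by
    have := hh.eLpNorm_eq_integral_rpow_norm hq0 ENNReal.ofReal_ne_top
    rw [this, htr] at hle
    have h1 : (∫ a, ‖h a‖ ^ p ∂μ) ^ p⁻¹ ≤ εa :=
      (ENNReal.ofReal_le_ofReal_iff hεa.le).1 hle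
    have hI0 : 0 ≤ ∫ a, ‖h a‖ ^ p ∂μ :=
      integral_nonneg fun a => Real.rpow_nonneg (norm_nonneg _) _
    calc ∫ a, ‖h a‖ ^ p ∂μ = ((∫ a, ‖h a‖ ^ p ∂μ) ^ p⁻¹) ^ p :=
          (Real.rpow_inv_rpow hI0 hp.ne').symm
    _ ≤ εa ^ p := Real.rpow_le_rpow (Real.rpow_nonneg hI0 _) h1 hp.le
  have hint1 : Integrable (fun x => lpPow p (h x)) μ := integrable_lpPow hp hh
  have hint2 : Integrable (fun x => (k : ℝ) * ‖h x‖ ^ p) μ := by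
    simpa [htr] using (hh.integrable_norm_rpow hq0 ENNReal.ofReal_ne_top).const_mul (k : ℝ)
  calc ∫ x, lpPow p (h x) ∂μ ≤ ∫ x, (k : ℝ) * ‖h x‖ ^ p ∂μ :=
        integral_mono hint1 hint2 fun x => lpPow_le_card_mul hp.le _
  _ = k * ∫ x, ‖h x‖ ^ p ∂μ := by rw [integral_const_mul]
  _ ≤ k * εa ^ p := by
      exact mul_le_mul_of_nonneg_left hInorm (Nat.cast_nonneg k)

lemma boundB {d m : ℕ} {p : ℝ} (hp : 0 < p) {μ : Measure (Fin d → ℝ)}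
    [IsProbabilityMeasure μ] {R : ℝ} (hR : ∀ᵐ x ∂μ, ‖x‖ ≤ R)
    {g : (Fin d → ℝ) → Fin m → ℝ} (hgc : Continuous g) (hgs : HasCompactSupport g)
    {ε : ℝ} (hε : 0 < ε) :
    ∃ δ > 0, ∀ π : Measure ((Fin d → ℝ) × (Fin d → ℝ)), IsCoupling π μ μ →
      (∫ z, lpPow p (z.1 - z.2) ∂π) ≤ δ →
      ∫ z, lpPow p (g z.1 - g z.2) ∂π ≤ ε := by
  obtain ⟨K, hK⟩ := hgs.exists_bound_of_continuous hgc
  have hK0 : 0 ≤ K := (norm_nonneg _).trans (hK 0)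
  set ε₂ : ℝ := (ε / (2 * (m + 1))) ^ p⁻¹ with hε₂def
  have hε₂ : 0 < ε₂ := Real.rpow_pos_of_pos (by positivity) _
  have hε₂p : (m : ℝ) * ε₂ ^ p ≤ ε / 2 := by
    rw [hε₂def, Real.rpow_inv_rpow (by positivity) hp.ne']
    rw [div_mul_eq_div_div]
    have : (m : ℝ) / (m + 1) ≤ 1 := by
      rw [div_le_one (by positivity)]; linarith
    calc (m : ℝ) * (ε / 2 / (m + 1)) = (m / (m + 1)) * (ε / 2) := by ring
    _ ≤ 1 * (ε / 2) := mul_le_mul_of_nonneg_right this (by positivity)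
    _ = ε / 2 := one_mul _
  have huc := hgs.uniformContinuous_of_continuous hgc
  obtain ⟨δ₀, hδ₀, hδ₀p⟩ := Metric.uniformContinuous_iff.1 huc ε₂ hε₂
  set M : ℝ := (m : ℝ) * (K + K) ^ p + 1 with hMdef
  have hM : 0 < M := by positivity
  refine ⟨ε / 2 * δ₀ ^ p / M, by positivity, fun π hπ hcost => ?_⟩
  haveI := hπ.isProb
  have hintdiag := integrable_lpPow_diag hp hπ hR
  set S := {z : (Fin d → ℝ) × (Fin d → ℝ) | δ₀ ≤ dist z.1 z.2} with hSdef
  have hSm : MeasurableSet S :=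
    (isClosed_le continuous_const (continuous_fst.dist continuous_snd)).measurableSet
  have hπS : (π S).toReal ≤ ε / 2 * δ₀ ^ p / M / δ₀ ^ p := by
    have h1 := markov_diag hp hδ₀ hintdiag (π := π)
    have h2 : δ₀ ^ p * (π S).toReal ≤ ε / 2 * δ₀ ^ p / M := h1.trans hcost
    have h3 : 0 < δ₀ ^ p := Real.rpow_pos_of_pos hδ₀ _
    rw [mul_comm, ← le_div_iff₀ h3] at h2
    exact h2
  have hπS' : (m : ℝ) * (K + K) ^ p * (π S).toReal ≤ ε / 2 := by
    have hbd : (m : ℝ) * (K + K) ^ p ≤ M := by rw [hMdef]; linarith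
    have hnn : (0:ℝ) ≤ (π S).toReal := ENNReal.toReal_nonneg
    calc (m : ℝ) * (K + K) ^ p * (π S).toReal ≤ M * (ε / 2 * δ₀ ^ p / M / δ₀ ^ p) :=
          mul_le_mul hbd hπS hnn hM.le
    _ = ε / 2 := by
        field_simp
  -- pointwise bound
  have hpt : ∀ z : (Fin d → ℝ) × (Fin d → ℝ),
      lpPow p (g z.1 - g z.2) ≤ (m : ℝ) * ε₂ ^ p
        + S.indicator (fun _ => (m : ℝ) * (K + K) ^ p) z := by
    intro z
    by_cases hz : z ∈ S
    · rw [Set.indicator_of_mem hz]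
      have : lpPow p (g z.1 - g z.2) ≤ (m : ℝ) * (K + K) ^ p := by
        calc lpPow p (g z.1 - g z.2) ≤ m * ‖g z.1 - g z.2‖ ^ p := lpPow_le_card_mul hp.le _
        _ ≤ m * (K + K) ^ p := by
            refine mul_le_mul_of_nonneg_left (Real.rpow_le_rpow (norm_nonneg _)
              ((norm_sub_le _ _).trans (add_le_add (hK _) (hK _))) hp.le) (Nat.cast_nonneg m)
      have h0 : (0:ℝ) ≤ (m : ℝ) * ε₂ ^ p := by positivity
      linarith
    · rw [Set.indicator_of_notMem hz, add_zero]
      have hdist : dist z.1 z.2 < δ₀ := lt_of_not_ge hz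
      have : dist (g z.1) (g z.2) < ε₂ := hδ₀p hdist
      rw [dist_eq_norm] at this
      calc lpPow p (g z.1 - g z.2) ≤ m * ‖g z.1 - g z.2‖ ^ p := lpPow_le_card_mul hp.le _
      _ ≤ m * ε₂ ^ p :=
          mul_le_mul_of_nonneg_left (Real.rpow_le_rpow (norm_nonneg _) this.le hp.le)
            (Nat.cast_nonneg m)
  have hintrhs : Integrable (fun z => (m : ℝ) * ε₂ ^ p
      + S.indicator (fun _ => (m : ℝ) * (K + K) ^ p) z) π :=
    (integrable_const _).add ((integrable_const _).indicator hSm)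
  have haesm : AEStronglyMeasurable
      (fun z : (Fin d → ℝ) × (Fin d → ℝ) => lpPow p (g z.1 - g z.2)) π :=
    ((lpPow_continuous hp.le m).comp
      ((hgc.comp continuous_fst).sub (hgc.comp continuous_snd))).aestronglyMeasurable
  calc ∫ z, lpPow p (g z.1 - g z.2) ∂π
      ≤ ∫ z, ((m : ℝ) * ε₂ ^ p + S.indicator (fun _ => (m : ℝ) * (K + K) ^ p) z) ∂π :=
        integral_mono_of_nonneg (Filter.Eventually.of_forall fun z => lpPow_nonneg _)
          hintrhs (Filter.Eventually.of_forall hpt)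
  _ = (m : ℝ) * ε₂ ^ p + (m : ℝ) * (K + K) ^ p * (π S).toReal := by
      rw [integral_add (integrable_const _) ((integrable_const _).indicator hSm),
        integral_const, integral_indicator_const _ hSm]
      simp [mul_comm, measureReal_def]
  _ ≤ ε / 2 + ε / 2 := add_le_add hε₂p hπS'
  _ = ε := by ring

lemma keyE {d m : ℕ} {p : ℝ} (hp : 0 < p) {μ : Measure (Fin d → ℝ)}
    [IsProbabilityMeasure μ] {R : ℝ} (hR : ∀ᵐ x ∂μ, ‖x‖ ≤ R)
    {f : (Fin d → ℝ) → Fin m → ℝ} (hf : MemLp f (ENNReal.ofReal p) μ)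
    {ε : ℝ} (hε : 0 < ε) :
    ∃ δ > 0, ∀ π : Measure ((Fin d → ℝ) × (Fin d → ℝ)), IsCoupling π μ μ →
      (∫ z, lpPow p (z.1 - z.2) ∂π) ≤ δ →
      ∫ z, lpPow p (f z.1 - f z.2) ∂π ≤ ε := by
  set c2 : ℝ := 2 ^ p with hc2def
  have hc2 : 1 ≤ c2 := Real.one_le_rpow one_le_two hp.le
  have hc20 : 0 < c2 := lt_of_lt_of_le one_pos hc2
  set C : ℝ := c2 * c2 with hCdef
  have hC0 : 0 < C := by positivity
  have hc2C : c2 ≤ C := by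
    calc c2 = c2 * 1 := (mul_one _).symm
    _ ≤ c2 * c2 := mul_le_mul_of_nonneg_left hc2 hc20.le
  set εs : ℝ := ε / (3 * C) with hεsdef
  have hεs : 0 < εs := by positivity
  set εa : ℝ := (εs / (m + 1)) ^ p⁻¹ with hεadef
  have hεa : 0 < εa := Real.rpow_pos_of_pos (by positivity) _
  -- choose continuous compactly supported approximation
  obtain ⟨g, hgs, hgle, hgc, hgm⟩ := hf.exists_hasCompactSupport_eLpNorm_sub_le
    ENNReal.ofReal_ne_top (f := f) (ε := ENNReal.ofReal εa)
    (by simp [ENNReal.ofReal_eq_zero, not_le, hεa])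
  have hfg : MemLp (f - g) (ENNReal.ofReal p) μ := hf.sub hgm
  have hA : ∫ x, lpPow p ((f - g) x) ∂μ ≤ εs := by
    have h1 : ∫ x, lpPow p ((f - g) x) ∂μ ≤ m * εa ^ p :=
      integral_lpPow_le_of_eLpNorm_le hp hεa hfg hgle
    have h2 : (m : ℝ) * εa ^ p ≤ εs := by
      rw [hεadef, Real.rpow_inv_rpow (by positivity) hp.ne']
      have : (m : ℝ) / (m + 1) ≤ 1 := by
        rw [div_le_one (by positivity)]; linarith
      calc (m : ℝ) * (εs / (m + 1)) = (m / (m + 1)) * εs := by ring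
      _ ≤ 1 * εs := mul_le_mul_of_nonneg_right this hεs.le
      _ = εs := one_mul _
    exact h1.trans h2
  obtain ⟨δ, hδ, hδp⟩ := boundB hp hR hgc hgs hεs
  refine ⟨δ, hδ, fun π hπ hcost => ?_⟩
  haveI := hπ.isProb
  have hB := hδp π hπ hcost
  -- integrability of the three pieces
  obtain ⟨K, hK⟩ := hgs.exists_bound_of_continuous hgc
  have hfgae : AEStronglyMeasurable (fun x => lpPow p (f x - g x)) μ := by
    have : AEStronglyMeasurable (f - g) μ := hfg.aestronglyMeasurable
    have := (lpPow_continuous hp.le m).comp_aestronglyMeasurable this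
    simpa [Pi.sub_apply] using this
  have hint_fg : Integrable (fun x => lpPow p (f x - g x)) μ := by
    have := integrable_lpPow hp hfg
    simpa [Pi.sub_apply] using this
  have hint_gf : Integrable (fun x => lpPow p (g x - f x)) μ := by
    refine hint_fg.congr ?_
    filter_upwards with x
    rw [show g x - f x = -(f x - g x) by abel, lpPow_neg]
  have ht1 : Integrable (fun z : (Fin d → ℝ) × (Fin d → ℝ) => lpPow p (f z.1 - g z.1)) π :=
    hπ.integrable_fst hint_fg
  have ht3 : Integrable (fun z : (Fin d → ℝ) × (Fin d → ℝ) => lpPow p (g z.2 - f z.2)) π :=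
    hπ.integrable_snd hint_gf
  have ht2 : Integrable (fun z : (Fin d → ℝ) × (Fin d → ℝ) => lpPow p (g z.1 - g z.2)) π := by
    have haesm : AEStronglyMeasurable
        (fun z : (Fin d → ℝ) × (Fin d → ℝ) => lpPow p (g z.1 - g z.2)) π :=
      ((lpPow_continuous hp.le m).comp
        ((hgc.comp continuous_fst).sub (hgc.comp continuous_snd))).aestronglyMeasurable
    refine (integrable_const ((m : ℝ) * (K + K) ^ p)).mono' haesm ?_
    filter_upwards with z
    rw [Real.norm_of_nonneg (lpPow_nonneg _)]
    calc lpPow p (g z.1 - g z.2) ≤ m * ‖g z.1 - g z.2‖ ^ p := lpPow_le_card_mul hp.le _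
    _ ≤ m * (K + K) ^ p :=
        mul_le_mul_of_nonneg_left (Real.rpow_le_rpow (norm_nonneg _)
          ((norm_sub_le _ _).trans (add_le_add (hK _) (hK _))) hp.le) (Nat.cast_nonneg m)
  -- pointwise bound
  have hpt : ∀ z : (Fin d → ℝ) × (Fin d → ℝ),
      lpPow p (f z.1 - f z.2) ≤ C * lpPow p (f z.1 - g z.1)
        + C * lpPow p (g z.1 - g z.2) + C * lpPow p (g z.2 - f z.2) := by
    intro z
    have h1 : lpPow p (f z.1 - f z.2)
        ≤ c2 * (lpPow p (f z.1 - g z.1) + lpPow p (g z.1 - f z.2)) :=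
      lpPow_sub_le hp.le _ _ _
    have h2 : lpPow p (g z.1 - f z.2)
        ≤ c2 * (lpPow p (g z.1 - g z.2) + lpPow p (g z.2 - f z.2)) :=
      lpPow_sub_le hp.le _ _ _
    have hn1 : 0 ≤ lpPow p (f z.1 - g z.1) := lpPow_nonneg _
    have hn2 : 0 ≤ lpPow p (g z.1 - g z.2) := lpPow_nonneg _
    have hn3 : 0 ≤ lpPow p (g z.2 - f z.2) := lpPow_nonneg _
    calc lpPow p (f z.1 - f z.2)
        ≤ c2 * (lpPow p (f z.1 - g z.1) + lpPow p (g z.1 - f z.2)) := h1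
    _ = c2 * lpPow p (f z.1 - g z.1) + c2 * lpPow p (g z.1 - f z.2) := by ring
    _ ≤ c2 * lpPow p (f z.1 - g z.1)
        + c2 * (c2 * (lpPow p (g z.1 - g z.2) + lpPow p (g z.2 - f z.2))) := by
        have := mul_le_mul_of_nonneg_left h2 hc20.le
        linarith
    _ = c2 * lpPow p (f z.1 - g z.1) + C * lpPow p (g z.1 - g z.2)
        + C * lpPow p (g z.2 - f z.2) := by rw [hCdef]; ring
    _ ≤ C * lpPow p (f z.1 - g z.1) + C * lpPow p (g z.1 - g z.2)
        + C * lpPow p (g z.2 - f z.2) := by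
        have := mul_le_mul_of_nonneg_right hc2C hn1
        linarith
  -- integral comparison
  have hA1 : ∫ z, lpPow p (f z.1 - g z.1) ∂π ≤ εs := by
    have := hπ.integral_fst (h := fun x => lpPow p (f x - g x)) hfgae
    rw [this]
    calc ∫ x, lpPow p (f x - g x) ∂μ = ∫ x, lpPow p ((f - g) x) ∂μ := by
          simp [Pi.sub_apply]
    _ ≤ εs := hA
  have hC1 : ∫ z, lpPow p (g z.2 - f z.2) ∂π ≤ εs := by
    have haesm' : AEStronglyMeasurable (fun x => lpPow p (g x - f x)) μ :=
      hint_gf.aestronglyMeasurable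
    have := hπ.integral_snd (h := fun x => lpPow p (g x - f x)) haesm'
    rw [this]
    have : ∫ x, lpPow p (g x - f x) ∂μ = ∫ x, lpPow p ((f - g) x) ∂μ := by
      refine integral_congr_ae ?_
      filter_upwards with x
      rw [show g x - f x = -(f x - g x) by abel, lpPow_neg, Pi.sub_apply]
    rw [this]; exact hA
  calc ∫ z, lpPow p (f z.1 - f z.2) ∂π
      ≤ ∫ z, (C * lpPow p (f z.1 - g z.1) + C * lpPow p (g z.1 - g z.2)
          + C * lpPow p (g z.2 - f z.2)) ∂π := by
        refine integral_mono_of_nonneg (Filter.Eventually.of_forall fun z => lpPow_nonneg _)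
          ?_ (Filter.Eventually.of_forall hpt)
        exact ((ht1.const_mul C).add (ht2.const_mul C)).add (ht3.const_mul C)
  _ = C * (∫ z, lpPow p (f z.1 - g z.1) ∂π) + C * (∫ z, lpPow p (g z.1 - g z.2) ∂π)
      + C * (∫ z, lpPow p (g z.2 - f z.2) ∂π) := by
      have e1 := integral_add (μ := π) ((ht1.const_mul C).add (ht2.const_mul C)) (ht3.const_mul C)
      have e2 := integral_add (μ := π) (ht1.const_mul C) (ht2.const_mul C)
      simp only [Pi.add_apply] at e1 e2
      rw [e1, e2, integral_const_mul, integral_const_mul, integral_const_mul]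
  _ ≤ C * εs + C * εs + C * εs := by
      have g1 := mul_le_mul_of_nonneg_left hA1 hC0.le
      have g2 := mul_le_mul_of_nonneg_left hB hC0.le
      have g3 := mul_le_mul_of_nonneg_left hC1 hC0.le
      linarith
  _ = ε := by
      rw [hεsdef]
      field_simp
      ring

/-- `f_n → f` in `L^p(μ)` if and only if `d_TLp((μ, f_n), (μ, f)) → 0`. -/
theorem lp_tendsto_iff_tlp_tendsto {d m : ℕ} (Ω : Set (Fin d → ℝ)) (hΩo : IsOpen Ω)
    (hΩb : Bornology.IsBounded Ω) (p : ℝ) (hp1 : 1 < p)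
    (μ : Measure (Fin d → ℝ)) (hμ : IsProbabilityMeasure μ) (hμΩ : μ Ωᶜ = 0)
    (fseq : ℕ → (Fin d → ℝ) → Fin m → ℝ) (f : (Fin d → ℝ) → Fin m → ℝ)
    (hfseq : ∀ n, MemLp (fseq n) (ENNReal.ofReal p) μ)
    (hf : MemLp f (ENNReal.ofReal p) μ) :
    Tendsto (fun n => ∫ x, lpPow p (fseq n x - f x) ∂μ) atTop (𝓝 0)
      ↔ Tendsto (fun n => dTLp p μ μ (fseq n) f) atTop (𝓝 0) := by
  have hp : 0 < p := lt_trans one_pos hp1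
  obtain ⟨R, hRΩ⟩ := hΩb.exists_norm_le
  have hR : ∀ᵐ x ∂μ, ‖x‖ ≤ R := by
    rw [ae_iff]
    refine measure_mono_null (fun x hx => ?_) hμΩ
    simp only [Set.mem_setOf_eq, not_le] at hx
    intro hxΩ
    exact absurd (hRΩ x hxΩ) (not_le.2 hx)
  -- notation
  set c : ℕ → (Fin d → ℝ) → (Fin d → ℝ) → ℝ :=
    fun n x y => lpPow p (x - y) + lpPow p (fseq n x - f y) with hcdef
  set T : ℕ → ℝ := fun n => OTCost (c n) μ μ with hTdef
  haveI hne : Nonempty {π : Measure ((Fin d → ℝ) × (Fin d → ℝ)) //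
      IsCoupling π μ μ} := ⟨⟨μ.map (fun x => (x, x)), isCoupling_diag μ⟩⟩
  have hT0 : ∀ n, 0 ≤ T n := by
    intro n
    refine le_ciInf fun π => integral_nonneg fun z => ?_
    exact add_nonneg (lpPow_nonneg _) (lpPow_nonneg _)
  have hbdd : ∀ n, BddBelow (Set.range fun π : {π : Measure ((Fin d → ℝ) × (Fin d → ℝ)) //
      IsCoupling π μ μ} => ∫ z, (c n) z.1 z.2 ∂(π.1)) := by
    intro n
    refine ⟨0, fun y hy => ?_⟩
    obtain ⟨π, rfl⟩ := hy
    exact integral_nonneg fun z => add_nonneg (lpPow_nonneg _) (lpPow_nonneg _)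
  have hTle : ∀ n, T n ≤ ∫ x, lpPow p (fseq n x - f x) ∂μ := by
    intro n
    have hle := ciInf_le (hbdd n) (⟨μ.map (fun x => (x, x)), isCoupling_diag μ⟩ :
      {π : Measure ((Fin d → ℝ) × (Fin d → ℝ)) // IsCoupling π μ μ})
    refine hle.trans_eq ?_
    rw [measurableEmbedding_diag.integral_map]
    refine integral_congr_ae (Filter.Eventually.of_forall fun x => ?_)
    simp only [hcdef, sub_self]
    rw [show lpPow p (0 : Fin d → ℝ) = 0 by
      simp [lpPow, Real.zero_rpow hp.ne'], zero_add]
  have hdTLp : ∀ n, dTLp p μ μ (fseq n) f = (T n) ^ (1 / p) := fun n => rfl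
  constructor
  · intro hL
    have hTt : Tendsto T atTop (𝓝 0) := squeeze_zero hT0 hTle hL
    have hcont : ContinuousAt (fun x : ℝ => x ^ (1 / p)) 0 :=
      Real.continuousAt_rpow_const 0 (1 / p) (Or.inr (by positivity))
    have := hcont.tendsto.comp hTt
    rw [Real.zero_rpow (by positivity : (1:ℝ)/p ≠ 0)] at this
    simpa [hdTLp, Function.comp_def] using this
  · intro hT
    -- T n → 0
    have hTeq : ∀ n, T n = (dTLp p μ μ (fseq n) f) ^ p := by
      intro n
      rw [hdTLp n, one_div, Real.rpow_inv_rpow (hT0 n) hp.ne']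
    have hcont : ContinuousAt (fun x : ℝ => x ^ p) 0 :=
      Real.continuousAt_rpow_const 0 p (Or.inr hp.le)
    have hTt : Tendsto T atTop (𝓝 0) := by
      have := hcont.tendsto.comp hT
      rw [Real.zero_rpow hp.ne'] at this
      simpa [Function.comp_def, ← hTeq] using this
    -- choose near-optimal couplings
    have hchoice : ∀ n : ℕ, ∃ π : Measure ((Fin d → ℝ) × (Fin d → ℝ)),
        IsCoupling π μ μ ∧ ∫ z, (c n) z.1 z.2 ∂π < T n + 1 / (n + 1) := by
      intro n
      have hlt : T n < T n + 1 / (n + 1) := by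
        have : (0:ℝ) < 1 / (n + 1) := by positivity
        linarith
      obtain ⟨⟨π, hπ⟩, hπlt⟩ := exists_lt_of_ciInf_lt hlt
      exact ⟨π, hπ, hπlt⟩
    choose π hπ hπlt using hchoice
    set Cn : ℕ → ℝ := fun n => ∫ z, (c n) z.1 z.2 ∂(π n) with hCndef
    have hCn0 : ∀ n, 0 ≤ Cn n := fun n =>
      integral_nonneg fun z => add_nonneg (lpPow_nonneg _) (lpPow_nonneg _)
    have hCnt : Tendsto Cn atTop (𝓝 0) := by
      refine squeeze_zero hCn0 (fun n => (hπlt n).le) ?_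
      have h1 : Tendsto (fun n : ℕ => 1 / ((n : ℝ) + 1)) atTop (𝓝 0) :=
        tendsto_one_div_add_atTop_nhds_zero_nat
      simpa using hTt.add h1
    -- integrability of each cost piece
    have hprob : ∀ n, IsProbabilityMeasure (π n) := fun n => (hπ n).isProb
    have hint1 : ∀ n, Integrable
        (fun z : (Fin d → ℝ) × (Fin d → ℝ) => lpPow p (z.1 - z.2)) (π n) := fun n =>
      haveI := hprob n
      integrable_lpPow_diag hp (hπ n) hR
    have hsplit : ∀ (g1 g2 : (Fin d → ℝ) → Fin m → ℝ), MemLp g1 (ENNReal.ofReal p) μ →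
        MemLp g2 (ENNReal.ofReal p) μ → ∀ n, Integrable
        (fun z : (Fin d → ℝ) × (Fin d → ℝ) => lpPow p (g1 z.1 - g2 z.2)) (π n) := by
      intro g1 g2 hg1 hg2 n
      have haesm : AEStronglyMeasurable
          (fun z : (Fin d → ℝ) × (Fin d → ℝ) => lpPow p (g1 z.1 - g2 z.2)) (π n) := by
        refine (lpPow_continuous hp.le m).comp_aestronglyMeasurable ?_
        exact ((hπ n).aesm_fst hg1.aestronglyMeasurable).sub
          ((hπ n).aesm_snd hg2.aestronglyMeasurable)
      have hintb : Integrable (fun z : (Fin d → ℝ) × (Fin d → ℝ) =>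
          2 ^ p * (lpPow p (g1 z.1) + lpPow p (g2 z.2))) (π n) := by
        exact (((hπ n).integrable_fst (integrable_lpPow hp hg1)).add
          ((hπ n).integrable_snd (integrable_lpPow hp hg2))).const_mul _
      refine hintb.mono' haesm ?_
      filter_upwards with z
      rw [Real.norm_of_nonneg (lpPow_nonneg _)]
      have := lpPow_sub_le hp.le (g1 z.1) 0 (g2 z.2)
      simpa [lpPow_neg, sub_zero, zero_sub] using this
    have hint2 : ∀ n, Integrable
        (fun z : (Fin d → ℝ) × (Fin d → ℝ) => lpPow p (fseq n z.1 - f z.2)) (π n) :=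
      fun n => hsplit (fseq n) f (hfseq n) hf n
    have hint3 : ∀ n, Integrable
        (fun z : (Fin d → ℝ) × (Fin d → ℝ) => lpPow p (f z.1 - f z.2)) (π n) :=
      fun n => hsplit f f hf hf n
    have hCsum : ∀ n, Cn n = (∫ z, lpPow p (z.1 - z.2) ∂(π n))
        + ∫ z, lpPow p (fseq n z.1 - f z.2) ∂(π n) := by
      intro n
      rw [hCndef]
      simp only [hcdef]
      rw [integral_add (hint1 n) (hint2 n)]
    have hD_le : ∀ n, ∫ z, lpPow p (z.1 - z.2) ∂(π n) ≤ Cn n := by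
      intro n
      rw [hCsum n]
      have := integral_nonneg (μ := π n)
        (f := fun z : (Fin d → ℝ) × (Fin d → ℝ) => lpPow p (fseq n z.1 - f z.2))
        (fun z => lpPow_nonneg _)
      linarith
    have hE2_le : ∀ n, ∫ z, lpPow p (fseq n z.1 - f z.2) ∂(π n) ≤ Cn n := by
      intro n
      rw [hCsum n]
      have := integral_nonneg (μ := π n)
        (f := fun z : (Fin d → ℝ) × (Fin d → ℝ) => lpPow p (z.1 - z.2))
        (fun z => lpPow_nonneg _)
      linarith
    -- now prove the convergence
    rw [NormedAddCommGroup.tendsto_nhds_zero]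
    intro ε hε
    set c2 : ℝ := 2 ^ p with hc2def
    have hc20 : 0 < c2 := Real.rpow_pos_of_pos two_pos _
    set ε' : ℝ := ε / (2 * c2 + 1) with hε'def
    have hε' : 0 < ε' := by positivity
    obtain ⟨δ, hδ, hkey⟩ := keyE hp hR hf hε'
    have hev : ∀ᶠ n in atTop, Cn n < min δ ε' :=
      hCnt.eventually (Filter.Tendsto.eventually_lt_const (lt_min hδ hε') tendsto_id) |>.mono
        (fun n h => h)
    filter_upwards [hev] with n hn
    haveI := hprob n
    have hD : ∫ z, lpPow p (z.1 - z.2) ∂(π n) ≤ δ :=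
      (hD_le n).trans ((hn.trans_le (min_le_left _ _)).le)
    have hE3' : ∫ z, lpPow p (f z.1 - f z.2) ∂(π n) ≤ ε' := hkey (π n) (hπ n) hD
    have heq3 : (fun z : (Fin d → ℝ) × (Fin d → ℝ) => lpPow p (f z.2 - f z.1))
        = fun z : (Fin d → ℝ) × (Fin d → ℝ) => lpPow p (f z.1 - f z.2) := by
      funext z
      rw [show f z.2 - f z.1 = -(f z.1 - f z.2) by abel, lpPow_neg]
    have hintE3 : Integrable
        (fun z : (Fin d → ℝ) × (Fin d → ℝ) => lpPow p (f z.2 - f z.1)) (π n) := by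
      rw [heq3]; exact hint3 n
    have hE3 : ∫ z, lpPow p (f z.2 - f z.1) ∂(π n) ≤ ε' := by
      rw [heq3]; exact hE3'
    have hIn_eq : ∫ x, lpPow p (fseq n x - f x) ∂μ
        = ∫ z, lpPow p (fseq n z.1 - f z.1) ∂(π n) := by
      refine ((hπ n).integral_fst (h := fun x => lpPow p (fseq n x - f x)) ?_).symm
      exact (lpPow_continuous hp.le m).comp_aestronglyMeasurable
        ((hfseq n).aestronglyMeasurable.sub hf.aestronglyMeasurable)
    have hE2 : ∫ z, lpPow p (fseq n z.1 - f z.2) ∂(π n) ≤ ε' :=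
      (hE2_le n).trans ((hn.trans_le (min_le_right _ _)).le)
    have hmono : ∫ z, lpPow p (fseq n z.1 - f z.1) ∂(π n)
        ≤ c2 * ((∫ z, lpPow p (fseq n z.1 - f z.2) ∂(π n))
          + ∫ z, lpPow p (f z.2 - f z.1) ∂(π n)) := by
      have hrhsint : Integrable (fun z : (Fin d → ℝ) × (Fin d → ℝ) =>
          c2 * (lpPow p (fseq n z.1 - f z.2) + lpPow p (f z.2 - f z.1))) (π n) :=
        ((hint2 n).add hintE3).const_mul c2
      calc ∫ z, lpPow p (fseq n z.1 - f z.1) ∂(π n)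
          ≤ ∫ z, c2 * (lpPow p (fseq n z.1 - f z.2) + lpPow p (f z.2 - f z.1)) ∂(π n) := by
            refine integral_mono_of_nonneg
              (Filter.Eventually.of_forall fun z => lpPow_nonneg _) hrhsint
              (Filter.Eventually.of_forall fun z => ?_)
            exact lpPow_sub_le hp.le _ (f z.2) _
      _ = c2 * ((∫ z, lpPow p (fseq n z.1 - f z.2) ∂(π n))
          + ∫ z, lpPow p (f z.2 - f z.1) ∂(π n)) := by
          rw [integral_const_mul, integral_add (hint2 n) hintE3]
    have hIn_nonneg : 0 ≤ ∫ x, lpPow p (fseq n x - f x) ∂μ :=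
      integral_nonneg fun x => lpPow_nonneg _
    rw [Real.norm_of_nonneg hIn_nonneg]
    have hfin : ∫ x, lpPow p (fseq n x - f x) ∂μ ≤ c2 * (ε' + ε') := by
      rw [hIn_eq]
      refine hmono.trans ?_
      exact mul_le_mul_of_nonneg_left (add_le_add hE2 hE3) hc20.le
    have hεeq : ε' * (2 * c2 + 1) = ε := by
      rw [hε'def]; field_simp
    nlinarith [hε', hc20]
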